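/- Let T : H → H be nonexpansive with fixed point ξ, D₀ := max{‖x₀ − ξ‖, ‖v − ξ‖}, and x_{k+1} := α_k v + (1 − α_k) T(x_k) with α_k ∈ (0,1). Then for every k ≥ 0, (1/2)‖x_{k+1} − ξ‖² ≤ (1/2)(1 − α_k)‖x_k − ξ‖² + α_k⟨x_k − ξ, v − ξ⟩ + α_k D₀((3/2)D₀ α_k + ‖x_k − T(x_k)‖). -/

import Mathlib

set_option maxHeartbeats 1000000


theorem stmt3 {H : Type*} [NormedAddCommGroup H] [InnerProductSpace ℝ H]
    (T : H → H) (hT : ∀ x y : H, ‖T x - T y‖ ≤ ‖x - y‖)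
    (ξ v : H) (hξ : T ξ = ξ)
    (α : ℕ → ℝ) (hα : ∀ k, α k ∈ Set.Ioo (0:ℝ) 1)
    (x : ℕ → H) (hx : ∀ k, x (k+1) = α k • v + (1 - α k) • T (x k))
    (D₀ : ℝ) (hD₀ : D₀ = max ‖x 0 - ξ‖ ‖v - ξ‖) :
    ∀ k, (1/2 : ℝ) * ‖x (k+1) - ξ‖^2 ≤
      (1/2) * (1 - α k) * ‖x k - ξ‖^2 + α k * (inner ℝ (x k - ξ) (v - ξ) : ℝ)
        + α k * D₀ * ((3/2) * D₀ * α k + ‖x k - T (x k)‖) := by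
  have hu : ‖v - ξ‖ ≤ D₀ := hD₀ ▸ le_max_right _ _
  have hb : ∀ k, ‖x k - ξ‖ ≤ D₀ := by
    intro k
    induction k with
    | zero => exact hD₀ ▸ le_max_left _ _
    | succ n ih =>
      obtain ⟨h0, h1⟩ := hα n
      have hw : ‖T (x n) - ξ‖ ≤ ‖x n - ξ‖ := by
        have := hT (x n) ξ; rwa [hξ] at this
      calc ‖x (n+1) - ξ‖ = ‖α n • (v - ξ) + (1 - α n) • (T (x n) - ξ)‖ := by
            rw [hx n]; congr 1; rw [smul_sub, smul_sub]; module
        _ ≤ ‖α n • (v - ξ)‖ + ‖(1 - α n) • (T (x n) - ξ)‖ := norm_add_le _ _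
        _ = α n * ‖v - ξ‖ + (1 - α n) * ‖T (x n) - ξ‖ := by
            rw [norm_smul, norm_smul, Real.norm_eq_abs, Real.norm_eq_abs,
              abs_of_pos h0, abs_of_pos (by linarith)]
        _ ≤ D₀ := by nlinarith [hw.trans ih, hu]
  intro k
  obtain ⟨h0, h1⟩ := hα k
  set a := α k
  set u := v - ξ
  set w := T (x k) - ξ
  set y := x k - ξ with hy
  have hw : ‖w‖ ≤ ‖y‖ := by
    have := hT (x k) ξ; rwa [hξ] at this
  have hyD : ‖y‖ ≤ D₀ := hb k
  have hD0 : (0:ℝ) ≤ D₀ := le_trans (norm_nonneg _) hyD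
  have hN : (0:ℝ) ≤ ‖x k - T (x k)‖ := norm_nonneg _
  have hrw : x (k+1) - ξ = a • u + (1 - a) • w := by
    rw [hx k]; rw [smul_sub, smul_sub]; module
  have hexp : ‖x (k+1) - ξ‖^2
      = a^2 * ‖u‖^2 + 2*a*(1-a) * (inner ℝ u w : ℝ) + (1-a)^2 * ‖w‖^2 := by
    rw [hrw, norm_add_sq_real, norm_smul, norm_smul, real_inner_smul_left,
      real_inner_smul_right, Real.norm_eq_abs, Real.norm_eq_abs,
      abs_of_pos h0, abs_of_pos (by linarith : (0:ℝ) < 1 - a)]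
    ring
  have hcs1 : |(inner ℝ y u : ℝ)| ≤ D₀ * D₀ := by
    calc |(inner ℝ y u : ℝ)| ≤ ‖y‖ * ‖u‖ := abs_real_inner_le_norm _ _
      _ ≤ D₀ * D₀ := by gcongr
  have habs := abs_le.mp hcs1
  have hcs2 : (inner ℝ u w : ℝ) ≤ (inner ℝ y u : ℝ) + D₀ * ‖x k - T (x k)‖ := by
    have h4 : (inner ℝ u (w - y) : ℝ) ≤ ‖u‖ * ‖w - y‖ := real_inner_le_norm _ _
    have hwy : ‖w - y‖ = ‖x k - T (x k)‖ := by
      have : w - y = -(x k - T (x k)) := by simp only [w, hy]; abel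
      rw [this, norm_neg]
    have hsym : (inner ℝ u y : ℝ) = (inner ℝ y u : ℝ) := real_inner_comm _ _
    rw [inner_sub_right, hwy, hsym] at h4
    have : ‖u‖ * ‖x k - T (x k)‖ ≤ D₀ * ‖x k - T (x k)‖ := by gcongr
    linarith
  have huD : ‖u‖^2 ≤ D₀^2 := by
    have := norm_nonneg u; nlinarith
  have hwD : ‖w‖^2 ≤ ‖y‖^2 := by
    have := norm_nonneg w; nlinarith
  have hA : a^2 * ‖u‖^2 ≤ a^2 * D₀^2 := mul_le_mul_of_nonneg_left huD (sq_nonneg a)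
  have hB : (1-a)^2 * ‖w‖^2 ≤ (1-a) * ‖y‖^2 := by
    nlinarith [mul_le_mul_of_nonneg_left hwD (sq_nonneg (1-a)),
      mul_nonneg (mul_nonneg h0.le (by linarith : (0:ℝ) ≤ 1-a)) (sq_nonneg ‖y‖)]
  have hC : a*(1-a)*(inner ℝ u w : ℝ)
      ≤ a * (inner ℝ y u : ℝ) + a^2 * D₀^2 + a * D₀ * ‖x k - T (x k)‖ := by
    nlinarith [mul_le_mul_of_nonneg_left hcs2 (mul_nonneg h0.le (by linarith : (0:ℝ) ≤ 1-a)),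
      mul_le_mul_of_nonneg_left habs.1 (mul_nonneg h0.le h0.le),
      mul_nonneg (mul_nonneg h0.le h0.le) (mul_nonneg hD0 hN),
      mul_nonneg h0.le (mul_nonneg hD0 hN)]
  rw [hexp]
  nlinarith [hA, hB, hC]
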